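/- For every c > 0, the liminf as L → ∞ (L ranging over the even natural numbers) of r^L · E_W[τ_1^{(L)}] is at least c · e^{−c/r}; in particular this liminf is strictly positive. -/

import Mathlib

open MeasureTheory ProbabilityTheory
open scoped ENNReal

/-- The alternating pattern `(+, −, +, −, …)`: `0` codes `+`, `1` codes `−`, `2` codes `0`. -/
def altPat (j : ℕ) : Fin 3 := if j % 2 = 0 then 0 else 1

/-- The first regeneration time `τ₁^{(L)}`:
the first `n > L` such that `(ε_{n−L}, …, ε_{n−1})` equals the alternating word of length `L`. -/
noncomputable def tau1 (L : ℕ) (ε : ℕ → Fin 3) : ℕ :=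
  sInf {n : ℕ | L < n ∧ ∀ j < L, ε (n - L + j) = altPat j}

lemma altPat_ne_two (j : ℕ) : altPat j ≠ 2 := by unfold altPat; split <;> decide

lemma meas_fixed {r : ℝ} {w : Measure (Fin 3)} {W : Measure (ℕ → Fin 3)}
    (hiid : iIndepFun (fun i (ε : ℕ → Fin 3) => ε i) W)
    (hmarg : ∀ i : ℕ, W.map (fun ε => ε i) = w)
    (hw0 : w {0} = ENNReal.ofReal r) (hw1 : w {1} = ENNReal.ofReal r)
    (s : Finset ℕ) (a : ℕ → Fin 3) (ha : ∀ i ∈ s, a i ≠ 2) :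
    W {ε | ∀ i ∈ s, ε i = a i} = ENNReal.ofReal r ^ s.card := by
  have hset : {ε : ℕ → Fin 3 | ∀ i ∈ s, ε i = a i}
      = ⋂ i ∈ s, (fun ε : ℕ → Fin 3 => ε i) ⁻¹' {a i} := by
    ext ε; simp [Set.mem_iInter]
  rw [hset,
    hiid.measure_inter_preimage_eq_mul s (sets := fun i => {a i})
      (fun i _ => measurableSet_singleton (a i))]
  rw [← Finset.prod_const]
  refine Finset.prod_congr rfl fun i hi => ?_
  have h1 : W ((fun ε : ℕ → Fin 3 => ε i) ⁻¹' {a i}) = w {a i} := by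
    rw [← hmarg i, Measure.map_apply (measurable_pi_apply i) (measurableSet_singleton _)]
  have h3 : ∀ x : Fin 3, x = 0 ∨ x = 1 ∨ x = 2 := by decide
  rcases h3 (a i) with h | h | h
  · simpa [h, hw0] using h1
  · simpa [h, hw1] using h1
  · exact absurd h (ha i hi)

lemma pat_meas {r : ℝ} {w : Measure (Fin 3)} {W : Measure (ℕ → Fin 3)}
    (hiid : iIndepFun (fun i (ε : ℕ → Fin 3) => ε i) W)
    (hmarg : ∀ i : ℕ, W.map (fun ε => ε i) = w)
    (hw0 : w {0} = ENNReal.ofReal r) (hw1 : w {1} = ENNReal.ofReal r)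
    (L n : ℕ) (hn : L ≤ n) :
    W {ε | ∀ j < L, ε (n - L + j) = altPat j} = ENNReal.ofReal r ^ L := by
  have hset : {ε : ℕ → Fin 3 | ∀ j < L, ε (n - L + j) = altPat j}
      = {ε | ∀ i ∈ Finset.Ico (n - L) n, ε i = altPat (i - (n - L))} := by
    ext ε
    simp only [Set.mem_setOf_eq, Finset.mem_Ico]
    constructor
    · rintro h i ⟨h1, h2⟩
      have hj : i - (n - L) < L := by omega
      have := h _ hj
      rwa [show n - L + (i - (n - L)) = i by omega] at this
    · intro h j hj
      have := h (n - L + j) ⟨by omega, by omega⟩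
      rwa [show n - L + j - (n - L) = j by omega] at this
  rw [hset, meas_fixed hiid hmarg hw0 hw1 _ _ (fun i _ => altPat_ne_two _), Nat.card_Ico]
  congr 1
  omega

lemma pat_measurable (L n : ℕ) :
    MeasurableSet {ε : ℕ → Fin 3 | ∀ j < L, ε (n - L + j) = altPat j} := by
  have : {ε : ℕ → Fin 3 | ∀ j < L, ε (n - L + j) = altPat j}
      = ⋂ (j : ℕ) (_ : j < L), (fun ε : ℕ → Fin 3 => ε (n - L + j)) ⁻¹' {altPat j} := by
    ext ε; simp [Set.mem_iInter]
  rw [this]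
  exact MeasurableSet.iInter fun j => MeasurableSet.iInter fun _ =>
    (measurable_pi_apply _) (measurableSet_singleton _)

/-- a set determined by coordinates in `S` is a preimage under restriction to `S` -/
lemma determined_preimage (S : Finset ℕ) (B : Set (ℕ → Fin 3))
    (hdet : ∀ ε ε' : ℕ → Fin 3, (∀ i ∈ S, ε i = ε' i) → ε' ∈ B → ε ∈ B) :
    B = (fun (ε : ℕ → Fin 3) (i : S) => ε i) ⁻¹' ((fun (ε : ℕ → Fin 3) (i : S) => ε i) '' B) := by
  refine subset_antisymm (Set.subset_preimage_image _ _) ?_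
  rintro ε ⟨ε', hε', heq⟩
  exact hdet ε ε' (fun i hi => (congrFun heq ⟨i, hi⟩).symm) hε'

lemma empty_zero {r : ℝ} {w : Measure (Fin 3)} {W : Measure (ℕ → Fin 3)}
    (hWprob : IsProbabilityMeasure W)
    (hiid : iIndepFun (fun i (ε : ℕ → Fin 3) => ε i) W)
    (hmarg : ∀ i : ℕ, W.map (fun ε => ε i) = w)
    (hw0 : w {0} = ENNReal.ofReal r) (hw1 : w {1} = ENNReal.ofReal r)
    (hr0 : 0 < r) (hr1 : r < 1) (L : ℕ) (hL : 0 < L) :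
    W {ε | {n : ℕ | L < n ∧ ∀ j < L, ε (n - L + j) = altPat j} = ∅} = 0 := by
  have hrL0 : 0 < r ^ L := pow_pos hr0 L
  have hrL1 : r ^ L < 1 := pow_lt_one₀ hr0.le hr1 hL.ne'
  set A : ℕ → Set (ℕ → Fin 3) :=
    fun k => {ε | ∀ j < L, ε ((k + 2) * L - L + j) = altPat j} with hA
  have hAmeas : ∀ k, W (A k) = ENNReal.ofReal (r ^ L) := by
    intro k
    rw [hA, pat_meas hiid hmarg hw0 hw1 L ((k + 2) * L) (by nlinarith), ENNReal.ofReal_pow hr0.le]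
  have hAms : ∀ k, MeasurableSet (A k) := fun k => pat_measurable L ((k + 2) * L)
  -- coordinates of A k live in [(k+1)L, (k+2)L)
  have hcoord : ∀ k j, j < L → (k + 2) * L - L + j = (k + 1) * L + j := by
    intro k j hj
    have : (k + 2) * L = (k + 1) * L + L := by ring
    omega
  have hcoordmem : ∀ k j, j < L → (k + 1) * L ≤ (k + 1) * L + j ∧ (k + 1) * L + j < (k + 2) * L := by
    intro k j hj
    constructor
    · omega
    · have : (k + 2) * L = (k + 1) * L + L := by ring
      omega
  -- main induction
  have hcap : ∀ K : ℕ, W (⋂ k ∈ Finset.range K, (A k)ᶜ)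
      = (1 - ENNReal.ofReal (r ^ L)) ^ K := by
    intro K
    induction K with
    | zero => simp
    | succ K ih =>
      rw [Finset.range_add_one, Finset.set_biInter_insert]
      set CapK := ⋂ k ∈ Finset.range K, (A k)ᶜ with hCapK
      set S := Finset.range ((K + 1) * L) with hS
      set T := Finset.Ico ((K + 1) * L) ((K + 2) * L) with hT
      have hdisj : Disjoint S T := by
        rw [Finset.disjoint_left]
        intro i hiS hiT
        simp only [hS, Finset.mem_range] at hiS
        simp only [hT, Finset.mem_Ico] at hiT
        omega
      have hdetS : ∀ ε ε' : ℕ → Fin 3, (∀ i ∈ S, ε i = ε' i) → ε' ∈ CapK → ε ∈ CapK := by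
        intro ε ε' heq hε'
        simp only [hCapK, Set.mem_iInter, Finset.mem_range] at hε' ⊢
        intro k hk
        intro hmem
        refine hε' k hk ?_
        intro j hj
        rw [← heq _ ?_]
        · exact hmem j hj
        · simp only [hS, Finset.mem_range]
          rw [hcoord k j hj]
          calc (k + 1) * L + j < (k + 2) * L := (hcoordmem k j hj).2
            _ ≤ (K + 1) * L := Nat.mul_le_mul_right L (by omega)
      have hdetT : ∀ ε ε' : ℕ → Fin 3, (∀ i ∈ T, ε i = ε' i) → ε' ∈ (A K)ᶜ → ε ∈ (A K)ᶜ := by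
        intro ε ε' heq hε' hmem
        refine hε' ?_
        intro j hj
        rw [← heq _ ?_]
        · exact hmem j hj
        · simp only [hT, Finset.mem_Ico]
          rw [hcoord K j hj]
          exact hcoordmem K j hj
      have hSeq := determined_preimage S CapK hdetS
      have hTeq := determined_preimage T ((A K)ᶜ) hdetT
      have hind := hiid.indepFun_finset S T hdisj (fun i => measurable_pi_apply i)
      have hmul := hind.measure_inter_preimage_eq_mul
        ((fun (ε : ℕ → Fin 3) (i : S) => ε i) '' CapK)
        ((fun (ε : ℕ → Fin 3) (i : T) => ε i) '' ((A K)ᶜ))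
        (Set.toFinite _).measurableSet (Set.toFinite _).measurableSet
      have key : W ((A K)ᶜ ∩ CapK) = W CapK * W ((A K)ᶜ) := by
        rw [Set.inter_comm]
        calc W (CapK ∩ (A K)ᶜ)
            = W ((fun (ε : ℕ → Fin 3) (i : S) => ε i) ⁻¹'
                  ((fun (ε : ℕ → Fin 3) (i : S) => ε i) '' CapK) ∩
                (fun (ε : ℕ → Fin 3) (i : T) => ε i) ⁻¹'
                  ((fun (ε : ℕ → Fin 3) (i : T) => ε i) '' ((A K)ᶜ))) := by
              rw [← hSeq, ← hTeq]
          _ = _ := hmul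
          _ = W CapK * W ((A K)ᶜ) := by rw [← hSeq, ← hTeq]
      rw [key, ih, prob_compl_eq_one_sub (hAms K), hAmeas K, pow_succ]
  -- the empty-pattern event is inside every Cap K
  have hsub : ∀ K : ℕ, {ε : ℕ → Fin 3 | {n : ℕ | L < n ∧ ∀ j < L, ε (n - L + j) = altPat j} = ∅}
      ⊆ ⋂ k ∈ Finset.range K, (A k)ᶜ := by
    intro K ε hε
    simp only [Set.mem_setOf_eq, Set.eq_empty_iff_forall_notMem] at hε
    simp only [Set.mem_iInter, Finset.mem_range]
    intro k _ hmem
    refine hε ((k + 2) * L) ⟨?_, hmem⟩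
    have : L ≤ (k + 1) * L := Nat.le_mul_of_pos_left L (by omega)
    have h2 : (k + 2) * L = (k + 1) * L + L := by ring
    omega
  -- conclude
  have hbound : ∀ K : ℕ,
      W {ε : ℕ → Fin 3 | {n : ℕ | L < n ∧ ∀ j < L, ε (n - L + j) = altPat j} = ∅}
        ≤ ENNReal.ofReal ((1 - r ^ L) ^ K) := by
    intro K
    refine le_trans (measure_mono (hsub K)) ?_
    rw [hcap K]
    have : (1 : ℝ≥0∞) - ENNReal.ofReal (r ^ L) = ENNReal.ofReal (1 - r ^ L) := by
      rw [ENNReal.ofReal_sub 1 hrL0.le, ENNReal.ofReal_one]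
    rw [this, ← ENNReal.ofReal_pow (by linarith)]
  have htend : Filter.Tendsto (fun K => ENNReal.ofReal ((1 - r ^ L) ^ K))
      Filter.atTop (nhds 0) := by
    have h1 : Filter.Tendsto (fun K => (1 - r ^ L) ^ K) Filter.atTop (nhds 0) :=
      tendsto_pow_atTop_nhds_zero_of_lt_one (by linarith) (by linarith)
    simpa using ENNReal.tendsto_ofReal h1
  have := ge_of_tendsto' htend (fun K => hbound K)
  exact le_antisymm this zero_le

lemma core_bound {r : ℝ} {w : Measure (Fin 3)} {W : Measure (ℕ → Fin 3)}
    (hWprob : IsProbabilityMeasure W)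
    (hiid : iIndepFun (fun i (ε : ℕ → Fin 3) => ε i) W)
    (hmarg : ∀ i : ℕ, W.map (fun ε => ε i) = w)
    (hw0 : w {0} = ENNReal.ofReal r) (hw1 : w {1} = ENNReal.ofReal r)
    (hr0 : 0 < r) (hr1 : r < 1) (L : ℕ) (hL : 0 < L) :
    ENNReal.ofReal (2/9) ≤ ENNReal.ofReal (r ^ L) * ∫⁻ ε, (tau1 L ε : ℝ≥0∞) ∂W := by
  have hrL0 : 0 < r ^ L := pow_pos hr0 L
  set x : ℝ := (r ^ L)⁻¹ / 3 with hx
  have hx0 : 0 < x := by positivity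
  set M : ℕ := ⌈x⌉₊ with hM
  have hM0 : 1 ≤ M := Nat.ceil_pos.mpr hx0
  have hxr : x * r ^ L = 1 / 3 := by rw [hx]; field_simp
  have hM1 : (1 : ℝ) / 3 ≤ (M : ℝ) * r ^ L := by
    rw [← hxr]
    exact mul_le_mul_of_nonneg_right (Nat.le_ceil x) hrL0.le
  have hM2 : ((M : ℝ) - 1) * r ^ L ≤ 1 / 3 := by
    have h := Nat.ceil_lt_add_one hx0.le
    rw [← hxr]
    have : (M : ℝ) - 1 ≤ x := by rw [hM] at *; linarith
    exact mul_le_mul_of_nonneg_right this hrL0.le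
  set Pn : ℕ → Set (ℕ → Fin 3) :=
    fun n => {ε | ∀ j < L, ε (n - L + j) = altPat j} with hPn
  set Emp : Set (ℕ → Fin 3) :=
    {ε | {n : ℕ | L < n ∧ ∀ j < L, ε (n - L + j) = altPat j} = ∅} with hEmp
  set Bad : Set (ℕ → Fin 3) := Emp ∪ ⋃ n ∈ Finset.Ico (L + 1) (L + M), Pn n with hBad
  have hEmpMs : MeasurableSet Emp := by
    have heq : Emp = ⋂ (n : ℕ), ({ε : ℕ → Fin 3 | L < n ∧ ∀ j < L, ε (n - L + j) = altPat j})ᶜ := by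
      ext ε
      simp [hEmp, Set.eq_empty_iff_forall_notMem]
    rw [heq]
    refine MeasurableSet.iInter fun n => MeasurableSet.compl ?_
    by_cases h : L < n
    · have : {ε : ℕ → Fin 3 | L < n ∧ ∀ j < L, ε (n - L + j) = altPat j}
          = {ε : ℕ → Fin 3 | ∀ j < L, ε (n - L + j) = altPat j} := by ext; simp [h]
      rw [this]; exact pat_measurable L n
    · have : {ε : ℕ → Fin 3 | L < n ∧ ∀ j < L, ε (n - L + j) = altPat j} = ∅ := by
        ext; simp [h]
      rw [this]; exact MeasurableSet.empty
  have hBadMs : MeasurableSet Bad :=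
    hEmpMs.union (MeasurableSet.biUnion (Finset.Ico (L+1) (L+M)).countable_toSet
      fun n _ => pat_measurable L n)
  have hBadLe : W Bad ≤ ENNReal.ofReal (1/3) := by
    refine le_trans (measure_union_le _ _) ?_
    rw [empty_zero hWprob hiid hmarg hw0 hw1 hr0 hr1 L hL, zero_add]
    refine le_trans (measure_biUnion_finset_le _ _) ?_
    have heach : ∀ n ∈ Finset.Ico (L + 1) (L + M), W (Pn n) = ENNReal.ofReal (r ^ L) := by
      intro n hn
      rw [Finset.mem_Ico] at hn
      rw [hPn]
      rw [pat_meas hiid hmarg hw0 hw1 L n (by omega), ENNReal.ofReal_pow hr0.le]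
    rw [Finset.sum_congr rfl heach, Finset.sum_const, Nat.card_Ico,
      show L + M - (L + 1) = M - 1 by omega, nsmul_eq_mul]
    calc ((M - 1 : ℕ) : ℝ≥0∞) * ENNReal.ofReal (r ^ L)
        = ENNReal.ofReal (((M - 1 : ℕ) : ℝ) * r ^ L) := by
          rw [ENNReal.ofReal_mul (by positivity), ENNReal.ofReal_natCast]
      _ ≤ ENNReal.ofReal (1/3) := by
          refine ENNReal.ofReal_le_ofReal ?_
          rw [Nat.cast_sub hM0, Nat.cast_one]
          exact hM2
  have hGood : ENNReal.ofReal (2/3) ≤ W Badᶜ := by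
    rw [prob_compl_eq_one_sub hBadMs]
    calc ENNReal.ofReal (2/3) = 1 - ENNReal.ofReal (1/3) := by
          rw [← ENNReal.ofReal_one, ← ENNReal.ofReal_sub _ (by norm_num : (0:ℝ) ≤ 1/3)]
          norm_num
      _ ≤ 1 - W Bad := tsub_le_tsub_left hBadLe 1
  have hpoint : ∀ ε, Badᶜ.indicator (fun _ => ((L + M : ℕ) : ℝ≥0∞)) ε ≤ (tau1 L ε : ℝ≥0∞) := by
    intro ε
    by_cases hε : ε ∈ Badᶜ
    · rw [Set.indicator_of_mem hε]
      have hnotbad : ε ∉ Bad := hε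
      have hne : {n : ℕ | L < n ∧ ∀ j < L, ε (n - L + j) = altPat j}.Nonempty := by
        rcases Set.eq_empty_or_nonempty
          {n : ℕ | L < n ∧ ∀ j < L, ε (n - L + j) = altPat j} with h | h
        · exact absurd (Set.mem_union_left _ (by exact h)) hnotbad
        · exact h
      have hmem : tau1 L ε ∈ {n : ℕ | L < n ∧ ∀ j < L, ε (n - L + j) = altPat j} :=
        Nat.sInf_mem hne
      have hge : L + M ≤ tau1 L ε := by
        by_contra hcon
        push_neg at hcon
        have hIco : tau1 L ε ∈ Finset.Ico (L + 1) (L + M) :=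
          Finset.mem_Ico.mpr ⟨by have := hmem.1; omega, hcon⟩
        exact hnotbad (Set.mem_union_right _ (Set.mem_biUnion hIco hmem.2))
      exact_mod_cast Nat.cast_le.mpr hge
    · rw [Set.indicator_of_notMem hε]; exact zero_le
  have hint : ((L + M : ℕ) : ℝ≥0∞) * W Badᶜ ≤ ∫⁻ ε, (tau1 L ε : ℝ≥0∞) ∂W := by
    rw [← lintegral_indicator_const hBadMs.compl]
    exact lintegral_mono hpoint
  calc ENNReal.ofReal (2/9)
      ≤ ENNReal.ofReal (r ^ L) * ((M : ℝ≥0∞) * ENNReal.ofReal (2/3)) := by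
        rw [← ENNReal.ofReal_natCast M, ← ENNReal.ofReal_mul (by positivity),
          ← ENNReal.ofReal_mul (by positivity)]
        refine ENNReal.ofReal_le_ofReal ?_
        nlinarith [hM1, hrL0]
    _ ≤ ENNReal.ofReal (r ^ L) * (((L + M : ℕ) : ℝ≥0∞) * W Badᶜ) := by
        refine mul_le_mul_right (mul_le_mul' ?_ hGood) _
        exact_mod_cast Nat.cast_le.mpr (by omega : M ≤ L + M)
    _ ≤ ENNReal.ofReal (r ^ L) * ∫⁻ ε, (tau1 L ε : ℝ≥0∞) ∂W := mul_le_mul_right hint _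


/-- for every `c > 0`, the liminf over (positive) even `L → ∞` of
`r^L · E_W[τ₁^{(L)}]` is at least `c·e^{−c/r}`; in particular it is strictly positive. -/
theorem liminf_scaled_mean_regeneration_time_pos
    (p : ℝ) (hp : 1 / 2 < p) (hp1 : p < 1)
    (r : ℝ) (hr : r = (1 - p) / 2)
    (w : Measure (Fin 3)) (hwprob : IsProbabilityMeasure w)
    (hw0 : w {0} = ENNReal.ofReal r) (hw1 : w {1} = ENNReal.ofReal r)
    (hw2 : w {2} = ENNReal.ofReal p)
    (W : Measure (ℕ → Fin 3)) (hWprob : IsProbabilityMeasure W)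
    (hiid : iIndepFun (fun i (ε : ℕ → Fin 3) => ε i) W)
    (hmarg : ∀ i : ℕ, W.map (fun ε => ε i) = w) :
    (∀ c : ℝ, 0 < c →
      ENNReal.ofReal (c * Real.exp (-c / r))
        ≤ Filter.liminf
            (fun L : ℕ => ENNReal.ofReal (r ^ L) * ∫⁻ ε, (tau1 L ε : ℝ≥0∞) ∂W)
            (Filter.atTop ⊓ Filter.principal {L : ℕ | Even L ∧ 0 < L})) ∧
    0 < Filter.liminf
          (fun L : ℕ => ENNReal.ofReal (r ^ L) * ∫⁻ ε, (tau1 L ε : ℝ≥0∞) ∂W)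
          (Filter.atTop ⊓ Filter.principal {L : ℕ | Even L ∧ 0 < L}) := by
  have hr0 : 0 < r := by rw [hr]; linarith
  have hr4 : r < 1/4 := by rw [hr]; linarith
  have hr1 : r < 1 := by linarith
  have hKey : ∀ᶠ L in (Filter.atTop ⊓ Filter.principal {L : ℕ | Even L ∧ 0 < L}),
      ENNReal.ofReal (2/9) ≤ ENNReal.ofReal (r ^ L) * ∫⁻ ε, (tau1 L ε : ℝ≥0∞) ∂W := by
    refine Filter.Eventually.filter_mono inf_le_right ?_
    rw [Filter.eventually_principal]
    intro L hL
    exact core_bound hWprob hiid hmarg hw0 hw1 hr0 hr1 L hL.2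
  have hlim : ENNReal.ofReal (2/9)
      ≤ Filter.liminf
          (fun L : ℕ => ENNReal.ofReal (r ^ L) * ∫⁻ ε, (tau1 L ε : ℝ≥0∞) ∂W)
          (Filter.atTop ⊓ Filter.principal {L : ℕ | Even L ∧ 0 < L}) :=
    Filter.le_liminf_of_le (by isBoundedDefault) hKey
  constructor
  · intro c hc
    refine le_trans (ENNReal.ofReal_le_ofReal ?_) hlim
    set y : ℝ := c / r with hy
    have hy0 : 0 < y := div_pos hc hr0
    have h1 : y ≤ Real.exp (y - 1) := by
      have := Real.add_one_le_exp (y - 1); linarith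
    have h2 : y * Real.exp (-y) ≤ Real.exp (-1 : ℝ) := by
      calc y * Real.exp (-y) ≤ Real.exp (y - 1) * Real.exp (-y) :=
            mul_le_mul_of_nonneg_right h1 (Real.exp_nonneg _)
        _ = Real.exp (-1 : ℝ) := by rw [← Real.exp_add]; ring_nf
    have h3 : Real.exp (-1 : ℝ) ≤ 1/2 := by
      have h4 : (2 : ℝ) ≤ Real.exp 1 := by
        have := Real.add_one_le_exp (1 : ℝ); linarith
      have h5 : Real.exp (-1 : ℝ) * Real.exp 1 = 1 := by
        rw [← Real.exp_add]; norm_num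
      nlinarith [Real.exp_nonneg (-1 : ℝ)]
    have hcr : c = r * y := by rw [hy]; field_simp
    calc c * Real.exp (-c / r) = r * (y * Real.exp (-y)) := by
          rw [hcr, neg_div]
          rw [show r * y / r = y by field_simp]
          ring
      _ ≤ r * Real.exp (-1 : ℝ) := mul_le_mul_of_nonneg_left h2 hr0.le
      _ ≤ 2/9 := by nlinarith [Real.exp_nonneg (-1 : ℝ)]
  · exact lt_of_lt_of_le (ENNReal.ofReal_pos.mpr (by norm_num)) hlim
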